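/- Let f_i : X → ℝ ∪ {∞}, 1 ≤ i ≤ m, be proper closed functions and define f = min_{1≤i≤m} f_i. Let x̄ be such that ∂f(x̄) ≠ ∅ and, for each i in the active index set I(x̄) = {i : f_i(x̄) = f(x̄)}, ∂f_i(x̄) ≠ ∅ and f_i satisfies the KL property at x̄ with exponent α_i ∈ [0,1). Then f satisfies the KL property at x̄ with exponent α = max{α_i : i ∈ I(x̄)}. -/

import Mathlib

open Filter Topology

variable {E : Type*} [NormedAddCommGroup E] [InnerProductSpace ℝ E] [FiniteDimensional ℝ E]

/-- `ζ` is a regular (Fréchet) subgradient of `f` at `x`. -/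
def HasRegSubgradAt (f : E → EReal) (x ζ : E) : Prop :=
  ∃ r : ℝ, f x = (r : EReal) ∧ ∀ ε : ℝ, 0 < ε →
    ∀ᶠ z in 𝓝[≠] x, ((r + inner ℝ ζ (z - x) - ε * ‖z - x‖ : ℝ) : EReal) ≤ f z

/-- The limiting (Mordukhovich) subdifferential of `f` at `x`. -/
def limSubdiff (f : E → EReal) (x : E) : Set E :=
  {ζ | ∃ (xk : ℕ → E) (ζk : ℕ → E),
    Tendsto xk atTop (𝓝 x) ∧ Tendsto (fun k => f (xk k)) atTop (𝓝 (f x)) ∧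
    Tendsto ζk atTop (𝓝 ζ) ∧ ∀ k, HasRegSubgradAt f (xk k) (ζk k)}

/-- `h` satisfies the KL property at `x0` with exponent `α`:
`dist(0, ∂h(x)) ≥ c (h(x) - h(x0))^α` near `x0` in the relevant range. -/
def KLExpAt (h : E → EReal) (x0 : E) (α : ℝ) : Prop :=
  ∃ c > (0 : ℝ), ∃ a > (0 : ℝ), ∃ ε > (0 : ℝ), ∀ x : E, ‖x - x0‖ < ε →
    h x0 < h x → h x < h x0 + (a : EReal) →
    ENNReal.ofReal (c * ((h x - h x0).toReal) ^ α) ≤ Metric.infEDist 0 (limSubdiff h x)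

/-- The minimum of finitely many functions is attained at each point. -/
lemma exists_min_fin {m : ℕ} (hm : 0 < m) (f : Fin m → E → EReal) (x : E) :
    ∃ i, f i x = ⨅ j, f j x := by
  haveI : Nonempty (Fin m) := ⟨⟨0, hm⟩⟩
  obtain ⟨i, hi⟩ := Finite.exists_min (fun j => f j x)
  exact ⟨i, le_antisymm (le_iInf hi) (iInf_le _ i)⟩

/-- A regular subgradient of the min is a regular subgradient of an active component. -/
lemma reg_of_min {m : ℕ} (f : Fin m → E → EReal) {x ζ : E} {i : Fin m}
    (h : f i x = ⨅ j, f j x) (hr : HasRegSubgradAt (fun y => ⨅ j, f j y) x ζ) :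
    HasRegSubgradAt (f i) x ζ := by
  obtain ⟨r, hr1, hr2⟩ := hr
  exact ⟨r, by rw [h]; exact hr1,
    fun ε hε => (hr2 ε hε).mono fun z hz => hz.trans (iInf_le _ i)⟩

/-- A limiting subgradient of the min is a limiting subgradient of some active component. -/
lemma limSubdiff_iInf_subset {m : ℕ} (hm : 0 < m) (f : Fin m → E → EReal)
    (hlsc : ∀ i, LowerSemicontinuous (f i)) (x ζ : E)
    (hζ : ζ ∈ limSubdiff (fun y => ⨅ i, f i y) x) :
    ∃ i, f i x = (⨅ j, f j x) ∧ ζ ∈ limSubdiff (f i) x := by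
  haveI : Nonempty (Fin m) := ⟨⟨0, hm⟩⟩
  obtain ⟨xk, ζk, hxk, hfxk, hζk, hreg⟩ := hζ
  choose g hg using fun k => exists_min_fin hm f (xk k)
  have hfreq : ∃ i : Fin m, ∃ᶠ k in atTop, g k = i := by
    by_contra h
    push_neg at h
    obtain ⟨k, hk⟩ := (Filter.eventually_all.2 h).exists
    exact hk (g k) rfl
  obtain ⟨i, hi⟩ := hfreq
  obtain ⟨φ, hφ, hgφ⟩ := Filter.extraction_of_frequently_atTop hi
  have hxφ : Tendsto (xk ∘ φ) atTop (𝓝 x) := hxk.comp hφ.tendsto_atTop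
  have hFφ : Tendsto (fun n => (⨅ j, f j (xk (φ n)))) atTop (𝓝 (⨅ j, f j x)) :=
    hfxk.comp hφ.tendsto_atTop
  have hfi : ∀ n, f i (xk (φ n)) = ⨅ j, f j (xk (φ n)) := fun n => by
    rw [← hgφ n]; exact hg (φ n)
  have hfiφ : Tendsto (fun n => f i (xk (φ n))) atTop (𝓝 (⨅ j, f j x)) :=
    hFφ.congr (fun n => (hfi n).symm)
  have hix : f i x = ⨅ j, f j x := by
    refine le_antisymm ?_ (iInf_le _ i)
    by_contra h
    push_neg at h
    obtain ⟨y, hy1, hy2⟩ := exists_between h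
    have hev1 : ∀ᶠ n in atTop, y < f i (xk (φ n)) := hxφ.eventually (hlsc i x y hy2)
    have hev2 : ∀ᶠ n in atTop, f i (xk (φ n)) < y := hfiφ.eventually_lt_const hy1
    obtain ⟨n, h1n, h2n⟩ := (hev1.and hev2).exists
    exact absurd (h1n.trans h2n) (lt_irrefl y)
  refine ⟨i, hix, xk ∘ φ, ζk ∘ φ, hxφ, ?_, hζk.comp hφ.tendsto_atTop,
    fun n => reg_of_min f (hfi n) (hreg (φ n))⟩
  rw [hix]
  exact hfiφ

/-- KL exponent of the minimum of finitely many proper closed functions. -/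
theorem stmt6 (m : ℕ) (hm : 0 < m) (f : Fin m → E → EReal)
    (hproper : ∀ i, (∃ z, f i z ≠ ⊤) ∧ ∀ z, f i z ≠ ⊥)
    (hlsc : ∀ i, LowerSemicontinuous (f i))
    (xb : E) (α : Fin m → ℝ) (hα : ∀ i, 0 ≤ α i ∧ α i < 1)
    (hxb : (limSubdiff (fun x => ⨅ i, f i x) xb).Nonempty)
    (hactive : ∀ i, f i xb = (⨅ j, f j xb) →
      (limSubdiff (f i) xb).Nonempty ∧ KLExpAt (f i) xb (α i)) :
    KLExpAt (fun x => ⨅ i, f i x) xb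
      (sSup (α '' {i | f i xb = ⨅ j, f j xb})) := by
  haveI : Nonempty (Fin m) := ⟨⟨0, hm⟩⟩
  set F : E → EReal := fun x => ⨅ i, f i x with hF
  -- trivial cases: F xb = ⊤ or ⊥
  by_cases htop : F xb = ⊤
  · refine ⟨1, one_pos, 1, one_pos, 1, one_pos, fun x _ h1 _ => absurd h1 ?_⟩
    simp only [F] at htop ⊢
    rw [htop]
    exact not_top_lt
  by_cases hbot : F xb = ⊥
  · refine ⟨1, one_pos, 1, one_pos, 1, one_pos, fun x _ _ h2 => absurd h2 ?_⟩
    simp only [F] at hbot ⊢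
    rw [hbot, EReal.bot_add]
    exact not_lt_bot
  set r : ℝ := (F xb).toReal with hr
  have hFxb : F xb = (r : EReal) := (EReal.coe_toReal htop hbot).symm
  -- choose constants for each index
  have haux : ∀ i : Fin m, ∃ c > (0:ℝ), ∃ a > (0:ℝ), ∃ ε > (0:ℝ),
      ((f i xb = F xb → ∀ x : E, ‖x - xb‖ < ε →
        f i xb < f i x → f i x < f i xb + (a : EReal) →
        ENNReal.ofReal (c * ((f i x - f i xb).toReal) ^ (α i)) ≤
          Metric.infEDist 0 (limSubdiff (f i) x)) ∧
       (f i xb ≠ F xb → ∀ x : E, ‖x - xb‖ < ε → ((r + a : ℝ) : EReal) ≤ f i x)) := by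
    intro i
    by_cases hiS : f i xb = F xb
    · obtain ⟨c, hc, a, ha, ε, hε, hkl⟩ := (hactive i hiS).2
      exact ⟨c, hc, a, ha, ε, hε, fun _ => hkl, fun h => absurd hiS h⟩
    · -- inactive: f i xb > F xb = r
      have hgt : (r : EReal) < f i xb := by
        rw [← hFxb]
        exact lt_of_le_of_ne (iInf_le _ i) (Ne.symm hiS)
      obtain ⟨y, hy1, hy2⟩ := exists_between hgt
      have hyt : y ≠ ⊤ := (hy2.trans_le le_top).ne
      have hyb : y ≠ ⊥ := (bot_le.trans_lt hy1).ne'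
      have hycoe : ((y.toReal : ℝ) : EReal) = y := EReal.coe_toReal hyt hyb
      have hry : r < y.toReal := by
        rw [← EReal.coe_lt_coe_iff]
        rw [hycoe]
        exact hy1
      have hev : ∀ᶠ z in 𝓝 xb, y < f i z := hlsc i xb y hy2
      obtain ⟨ε, hε, hball⟩ := Metric.eventually_nhds_iff.1 hev
      refine ⟨1, one_pos, y.toReal - r, by linarith, ε, hε,
        fun h => absurd h hiS, fun _ x hx => ?_⟩
      have : y < f i x := hball (by rwa [dist_eq_norm])
      have : ((r + (y.toReal - r) : ℝ) : EReal) = y := by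
        rw [show r + (y.toReal - r) = y.toReal by ring, hycoe]
      rw [this]
      exact le_of_lt (hball (by rwa [dist_eq_norm]))
  choose c hc a ha ε hε hKL hMargin using haux
  -- active set
  set S : Set (Fin m) := {i | f i xb = ⨅ j, f j xb} with hS
  have hSne : S.Nonempty := exists_min_fin hm f xb
  have hSfin : S.Finite := Set.toFinite S
  have hbdd : BddAbove (α '' S) := (hSfin.image α).bddAbove
  set αm : ℝ := sSup (α '' S) with hαm
  have hαle : ∀ i ∈ S, α i ≤ αm := fun i hi => le_csSup hbdd ⟨i, hi, rfl⟩
  -- global constants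
  set c0 : ℝ := Finset.univ.inf' Finset.univ_nonempty c with hc0
  set a0 : ℝ := min 1 (Finset.univ.inf' Finset.univ_nonempty a) with ha0
  set ε0 : ℝ := Finset.univ.inf' Finset.univ_nonempty ε with hε0
  have hc0pos : 0 < c0 := (Finset.lt_inf'_iff _).2 fun i _ => hc i
  have ha0pos : 0 < a0 := lt_min one_pos ((Finset.lt_inf'_iff _).2 fun i _ => ha i)
  have hε0pos : 0 < ε0 := (Finset.lt_inf'_iff _).2 fun i _ => hε i
  have hc0le : ∀ i, c0 ≤ c i := fun i => Finset.inf'_le _ (Finset.mem_univ i)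
  have ha0le : ∀ i, a0 ≤ a i :=
    fun i => (min_le_right _ _).trans (Finset.inf'_le _ (Finset.mem_univ i))
  have hε0le : ∀ i, ε0 ≤ ε i := fun i => Finset.inf'_le _ (Finset.mem_univ i)
  have ha01 : a0 ≤ 1 := min_le_left _ _
  refine ⟨c0, hc0pos, a0, ha0pos, ε0, hε0pos, fun x hx h1 h2 => ?_⟩
  -- F x is a real number t with r < t < r + a0
  have h1' : (r : EReal) < F x := by rw [← hFxb]; exact h1
  have h2' : F x < ((r + a0 : ℝ) : EReal) := by
    rw [EReal.coe_add]
    rw [← hFxb]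
    exact h2
  have hFxt : F x ≠ ⊤ := (h2'.trans_le le_top).ne
  have hFxb' : F x ≠ ⊥ := (bot_le.trans_lt h1').ne'
  set t : ℝ := (F x).toReal with ht
  have hFx : F x = (t : EReal) := (EReal.coe_toReal hFxt hFxb').symm
  have hrt : r < t := by rw [← EReal.coe_lt_coe_iff, ← hFx]; exact h1'
  have hta : t < r + a0 := by rw [← EReal.coe_lt_coe_iff, ← hFx]; exact h2'
  have hsub : F x - F xb = ((t - r : ℝ) : EReal) := by
    rw [hFx, hFxb, EReal.coe_sub]
  have hs1 : t - r ≤ 1 := by linarith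
  have hs0 : 0 < t - r := by linarith
  -- main estimate
  rw [Metric.le_infEDist]
  intro ζ hζ
  obtain ⟨i, hix, hζi⟩ := limSubdiff_iInf_subset hm f hlsc x ζ hζ
  -- i is active at xb
  have hiS : f i xb = F xb := by
    by_contra hiS
    have := hMargin i hiS x (hx.trans_le (hε0le i))
    have hlt : f i x < ((r + a i : ℝ) : EReal) := by
      rw [hix]
      calc F x < ((r + a0 : ℝ) : EReal) := h2'
        _ ≤ ((r + a i : ℝ) : EReal) := by
            rw [EReal.coe_le_coe_iff]; linarith [ha0le i]
    exact absurd this (not_le.2 hlt)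
  -- apply KL for f i at x
  have hkey := hKL i hiS x (hx.trans_le (hε0le i))
    (by rw [hiS, hix]; exact h1)
    (by rw [hiS, hix]
        calc F x < ((r + a0 : ℝ) : EReal) := h2'
          _ ≤ ((r + a i : ℝ) : EReal) := by rw [EReal.coe_le_coe_iff]; linarith [ha0le i]
          _ = F xb + ((a i : ℝ) : EReal) := by rw [hFxb, ← EReal.coe_add])
  have hsubi : (f i x - f i xb).toReal = t - r := by
    rw [hix, hiS]
    show (F x - F xb).toReal = t - r
    rw [hsub, EReal.toReal_coe]
  rw [hsubi] at hkey
  have hchain : Metric.infEDist 0 (limSubdiff (f i) x) ≤ edist 0 ζ :=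
    Metric.infEDist_le_edist_of_mem hζi
  refine le_trans ?_ (hkey.trans hchain)
  apply ENNReal.ofReal_le_ofReal
  have hsub2 : (F x - F xb).toReal = t - r := by rw [hsub, EReal.toReal_coe]
  show c0 * ((F x - F xb).toReal) ^ αm ≤ c i * (t - r) ^ (α i)
  rw [hsub2]
  have hpow : (t - r) ^ αm ≤ (t - r) ^ (α i) :=
    Real.rpow_le_rpow_of_exponent_ge hs0 hs1 (hαle i hiS)
  exact mul_le_mul (hc0le i) hpow (Real.rpow_nonneg hs0.le _) (hc i).le
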